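/- arXiv:0804.0112 — 2 statements merged into one kernel-verified Lean document; each statement's English description precedes it below -/
import Mathlib

section
/- For every odd negative integer n with 3 ∤ n, the reduction of q_n modulo 2 is squarefree in 𝔽₂[w]; moreover, if 3 | n, then (w+1)^2 divides q_n mod 2 but (w+1)^3 does not, and q_n/(w+1)^2 mod 2 is coprime to (w+1). -/
open Polynomial

/-- `qAux k` is the polynomial `q_{-(2k+1)}` of the paper. -/
noncomputable def qAux : ℕ → Polynomial ℤ
  | 0 => X ^ 3 - X ^ 2 + 2 * X - 7
  | 1 => X ^ 5 - 2 * X ^ 4 - 2 * X ^ 3 + 5 * X ^ 2 + 3 * X - 9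
  | 2 => X ^ 7 - 2 * X ^ 6 - 4 * X ^ 5 + 8 * X ^ 4 + 4 * X ^ 3 - 7 * X ^ 2 + 2 * X - 7
  | (k + 3) => (X ^ 2 - 1) * (qAux (k + 2) - qAux (k + 1)) + qAux k

/-- `qq n` is the polynomial `q_n` of the paper, for `n` odd and negative. -/
noncomputable def qq (n : ℤ) : Polynomial ℤ := qAux ((-1 - n) / 2).toNat

/-- The "odd part square root" of `qAux k` mod 2. -/
noncomputable def BB : ℕ → Polynomial (ZMod 2)
  | 0 => X
  | 1 => X ^ 2 + 1
  | 2 => X ^ 3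
  | (k + 3) => (X + 1) * (BB (k + 2) + BB (k + 1)) + BB k

lemma two_eq_zero' : (2 : Polynomial (ZMod 2)) = 0 := by
  have : ((2 : ℕ) : Polynomial (ZMod 2)) = 0 := by
    rw [← Polynomial.C_eq_natCast]
    norm_num
    decide
  simpa using this

/-- Key structural identity mod 2. -/
lemma qmap : ∀ k : ℕ,
    (qAux k).map (Int.castRingHom (ZMod 2)) = (X + 1) ^ 2 + X * (BB k) ^ 2
  | 0 => by
      have h2 := two_eq_zero'
      simp only [qAux, BB, Polynomial.map_sub, Polynomial.map_add, Polynomial.map_mul,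
        Polynomial.map_pow, Polynomial.map_X, Polynomial.map_ofNat]
      linear_combination (-X ^ 2 - 4 : Polynomial (ZMod 2)) * h2
  | 1 => by
      have h2 := two_eq_zero'
      simp only [qAux, BB, Polynomial.map_sub, Polynomial.map_add, Polynomial.map_mul,
        Polynomial.map_pow, Polynomial.map_X, Polynomial.map_ofNat]
      linear_combination (-X ^ 4 - 2 * X ^ 3 + 2 * X ^ 2 - 5 : Polynomial (ZMod 2)) * h2
  | 2 => by
      have h2 := two_eq_zero'
      simp only [qAux, BB, Polynomial.map_sub, Polynomial.map_add, Polynomial.map_mul,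
        Polynomial.map_pow, Polynomial.map_X, Polynomial.map_ofNat]
      linear_combination
        (-X ^ 6 - 2 * X ^ 5 + 4 * X ^ 4 + 2 * X ^ 3 - 4 * X ^ 2 - 4 : Polynomial (ZMod 2)) * h2
  | (k + 3) => by
      have h2 := two_eq_zero'
      have ih0 := qmap k
      have ih1 := qmap (k + 1)
      have ih2 := qmap (k + 2)
      show (((X:Polynomial ℤ) ^ 2 - 1) * (qAux (k + 2) - qAux (k + 1)) + qAux k).map
          (Int.castRingHom (ZMod 2)) = (X + 1) ^ 2 + X * (BB (k + 3)) ^ 2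
      rw [Polynomial.map_add, Polynomial.map_mul, Polynomial.map_sub, Polynomial.map_sub,
        Polynomial.map_pow, Polynomial.map_X, Polynomial.map_one, ih0, ih1, ih2]
      show _ = (X + 1) ^ 2 + X * ((X + 1) * (BB (k + 2) + BB (k + 1)) + BB k) ^ 2
      linear_combination (X * (X + 1) * (BB (k + 2) + BB (k + 1)) *
        (-(BB (k + 2)) - X * BB (k + 1) - BB k)) * h2

/-- Representatives of `BB k` modulo `(X+1)^2`, period 6. -/
noncomputable def cAux : ℕ → Polynomial (ZMod 2)
  | 0 => X
  | 1 => 0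
  | 2 => X
  | 3 => 1
  | 4 => 0
  | _ => 1

lemma Bmod : ∀ k : ℕ, (X + 1) ^ 2 ∣ BB k - cAux (k % 6)
  | 0 => by simp [BB, cAux]
  | 1 => by
      refine ⟨1, ?_⟩
      have h2 := two_eq_zero'
      show (X:Polynomial (ZMod 2)) ^ 2 + 1 - cAux 1 = _
      simp only [cAux]
      linear_combination (-X : Polynomial (ZMod 2)) * h2
  | 2 => by
      refine ⟨X, ?_⟩
      show (X:Polynomial (ZMod 2)) ^ 3 - cAux 2 = _
      simp only [cAux]
      linear_combination (-X - X ^ 2 : Polynomial (ZMod 2)) * two_eq_zero'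
  | (k + 3) => by
      have h2 := two_eq_zero'
      obtain ⟨u, hu⟩ := Bmod (k + 2)
      obtain ⟨v, hv⟩ := Bmod (k + 1)
      obtain ⟨w, hw⟩ := Bmod k
      have hB : BB (k + 3) = (X + 1) * (BB (k + 2) + BB (k + 1)) + BB k := rfl
      have h6 : k % 6 = 0 ∨ k % 6 = 1 ∨ k % 6 = 2 ∨ k % 6 = 3 ∨ k % 6 = 4 ∨ k % 6 = 5 := by
        omega
      rcases h6 with h | h | h | h | h | h
      · rw [(by omega : (k + 3) % 6 = 3)]
        rw [(by omega : (k + 2) % 6 = 2)] at hu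
        rw [(by omega : (k + 1) % 6 = 1)] at hv
        rw [h] at hw
        simp only [cAux] at hu hv hw ⊢
        refine ⟨(X + 1) * (u + v) + w + 1, ?_⟩
        rw [hB]
        linear_combination (X + 1) * hu + (X + 1) * hv + hw + (-1 : Polynomial (ZMod 2)) * h2
      · rw [(by omega : (k + 3) % 6 = 4)]
        rw [(by omega : (k + 2) % 6 = 3)] at hu
        rw [(by omega : (k + 1) % 6 = 2)] at hv
        rw [h] at hw
        simp only [cAux] at hu hv hw ⊢
        refine ⟨(X + 1) * (u + v) + w + 1, ?_⟩
        rw [hB]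
        linear_combination (X + 1) * hu + (X + 1) * hv + hw
      · rw [(by omega : (k + 3) % 6 = 5)]
        rw [(by omega : (k + 2) % 6 = 4)] at hu
        rw [(by omega : (k + 1) % 6 = 3)] at hv
        rw [h] at hw
        simp only [cAux] at hu hv hw ⊢
        refine ⟨(X + 1) * (u + v) + w, ?_⟩
        rw [hB]
        linear_combination (X + 1) * hu + (X + 1) * hv + hw + (X : Polynomial (ZMod 2)) * h2
      · rw [(by omega : (k + 3) % 6 = 0)]
        rw [(by omega : (k + 2) % 6 = 5)] at hu
        rw [(by omega : (k + 1) % 6 = 4)] at hv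
        rw [h] at hw
        simp only [cAux] at hu hv hw ⊢
        refine ⟨(X + 1) * (u + v) + w, ?_⟩
        rw [hB]
        linear_combination (X + 1) * hu + (X + 1) * hv + hw + (1 : Polynomial (ZMod 2)) * h2
      · rw [(by omega : (k + 3) % 6 = 1)]
        rw [(by omega : (k + 2) % 6 = 0)] at hu
        rw [(by omega : (k + 1) % 6 = 5)] at hv
        rw [h] at hw
        simp only [cAux] at hu hv hw ⊢
        refine ⟨(X + 1) * (u + v) + w + 1, ?_⟩
        rw [hB]
        linear_combination (X + 1) * hu + (X + 1) * hv + hw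
      · rw [(by omega : (k + 3) % 6 = 2)]
        rw [(by omega : (k + 2) % 6 = 1)] at hu
        rw [(by omega : (k + 1) % 6 = 0)] at hv
        rw [h] at hw
        simp only [cAux] at hu hv hw ⊢
        refine ⟨(X + 1) * (u + v) + w + 1, ?_⟩
        rw [hB]
        linear_combination (X + 1) * hu + (X + 1) * hv + hw + (-X : Polynomial (ZMod 2)) * h2

lemma eval_one_X_add_one : ((X + 1 : Polynomial (ZMod 2))).eval 1 = 0 := by
  rw [eval_add, eval_X, eval_one]
  decide

lemma eval_one_BB (k : ℕ) (h : k % 3 ≠ 1) : (BB k).eval 1 = 1 := by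
  obtain ⟨u, hu⟩ := Bmod k
  have h6 : k % 6 = 0 ∨ k % 6 = 2 ∨ k % 6 = 3 ∨ k % 6 = 5 := by omega
  have he : (BB k).eval 1 = (cAux (k % 6)).eval 1 := by
    have h0 := congrArg (Polynomial.eval 1) hu
    rw [eval_sub, eval_mul, eval_pow, eval_one_X_add_one] at h0
    rw [(by ring : (0 : ZMod 2) ^ 2 * (u.eval 1) = 0)] at h0
    exact sub_eq_zero.mp h0
  rcases h6 with h | h | h | h <;> rw [he, h] <;> simp [cAux]

lemma X_add_one_irred : Irreducible (X + 1 : Polynomial (ZMod 2)) := by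
  have : (X + 1 : Polynomial (ZMod 2)) = X - C 1 := by
    have : (C 1 : Polynomial (ZMod 2)) = 1 := by simp
    rw [this]
    linear_combination two_eq_zero'
  rw [this]
  exact irreducible_X_sub_C 1

lemma not_dvd_of_eval_one {p : Polynomial (ZMod 2)} (h : p.eval 1 = 1) :
    ¬ (X + 1 : Polynomial (ZMod 2)) ∣ p := by
  rintro ⟨g, hg⟩
  have := congrArg (Polynomial.eval 1) hg
  rw [eval_mul, eval_one_X_add_one, zero_mul, h] at this
  exact one_ne_zero this

/-- For every odd negative integer `n`: if `3 ∤ n` then the reduction of `q_n`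
mod `2` is squarefree in `𝔽₂[w]`; if `3 ∣ n` then `(w+1)^2` divides `q_n` mod
`2`, `(w+1)^3` does not, and `(q_n mod 2)/(w+1)^2` is coprime to `w+1`. -/
theorem q_mod_two_factorization (n : ℤ) (hodd : Odd n) (hneg : n < 0) :
    (¬ (3 ∣ n) → Squarefree ((qq n).map (Int.castRingHom (ZMod 2)))) ∧
    (3 ∣ n →
      ((X + 1) ^ 2 ∣ (qq n).map (Int.castRingHom (ZMod 2)) ∧
       ¬ (X + 1) ^ 3 ∣ (qq n).map (Int.castRingHom (ZMod 2)) ∧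
       IsCoprime ((qq n).map (Int.castRingHom (ZMod 2)) / (X + 1) ^ 2)
         (X + 1 : Polynomial (ZMod 2)))) := by
  obtain ⟨m, hm⟩ := hodd
  set k : ℕ := ((-1 - n) / 2).toNat with hkdef
  have hkz : (k : ℤ) = (-1 - n) / 2 := Int.toNat_of_nonneg (by omega)
  have hn : n = -(2 * (k : ℤ) + 1) := by omega
  have hq : (qq n).map (Int.castRingHom (ZMod 2)) = (X + 1) ^ 2 + X * (BB k) ^ 2 := by
    rw [qq, ← hkdef, qmap]
  have h2 := two_eq_zero'
  have hdvd3 : (3 ∣ n) ↔ k % 3 = 1 := by omega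
  constructor
  · intro h3
    have hk3 : k % 3 ≠ 1 := fun h => h3 (hdvd3.mpr h)
    have hev := eval_one_BB k hk3
    have hco : IsCoprime (X + 1 : Polynomial (ZMod 2)) (BB k) :=
      X_add_one_irred.coprime_iff_not_dvd.mpr (not_dvd_of_eval_one hev)
    have hder : derivative ((X + 1 : Polynomial (ZMod 2)) ^ 2 + X * (BB k) ^ 2)
        = (BB k) ^ 2 := by
      have hC : (C (2 : ZMod 2) : Polynomial (ZMod 2)) = 0 := by
        rw [(by decide : (2 : ZMod 2) = 0)]; simp
      have e1 : derivative ((X + 1 : Polynomial (ZMod 2)) ^ 2) = 2 * ((X + 1) ^ 1 * 1) := by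
        rw [derivative_pow]
        push_cast
        simp only [derivative_add, derivative_X, derivative_one, add_zero]
        rw [hC, h2]
        ring
      have e2 : derivative ((BB k) ^ 2) = 2 * ((BB k) ^ 1 * derivative (BB k)) := by
        rw [derivative_pow]
        push_cast
        rw [hC, h2]
        ring
      rw [derivative_add, derivative_mul, derivative_X, e1, e2, h2]
      ring
    have hsep : ((qq n).map (Int.castRingHom (ZMod 2))).Separable := by
      rw [hq, Polynomial.Separable, hder]
      have : IsCoprime ((X + 1 : Polynomial (ZMod 2)) ^ 2) ((BB k) ^ 2) := hco.pow
      have := this.add_mul_left_left X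
      rwa [mul_comm ((BB k) ^ 2) X] at this
    exact hsep.squarefree
  · intro h3
    have hk3 : k % 3 = 1 := hdvd3.mp h3
    have h6 : k % 6 = 1 ∨ k % 6 = 4 := by omega
    have hBdvd : (X + 1) ^ 2 ∣ BB k := by
      obtain ⟨u, hu⟩ := Bmod k
      rcases h6 with h | h <;> rw [h] at hu <;> simp only [cAux, sub_zero] at hu <;>
        exact ⟨u, hu⟩
    obtain ⟨E, hE⟩ := hBdvd
    set g : Polynomial (ZMod 2) := 1 + X * ((X + 1) ^ 2 * E ^ 2) with hgdef
    have hfac : (qq n).map (Int.castRingHom (ZMod 2)) = (X + 1) ^ 2 * g := by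
      rw [hq, hE, hgdef]; ring
    have hXne : (X + 1 : Polynomial (ZMod 2)) ≠ 0 := X_add_one_irred.ne_zero
    have hevg : g.eval 1 = 1 := by
      have := eval_one_X_add_one
      simp [hgdef, this]
    refine ⟨⟨g, hfac⟩, ?_, ?_⟩
    · rintro ⟨r, hr⟩
      rw [hfac] at hr
      have : g = (X + 1) * r := by
        have h' : (X + 1 : Polynomial (ZMod 2)) ^ 2 * g = (X + 1) ^ 2 * ((X + 1) * r) := by
          rw [hr]; ring
        exact mul_left_cancel₀ (pow_ne_zero 2 hXne) h'
      exact not_dvd_of_eval_one hevg ⟨r, this⟩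
    · have hdiv : (qq n).map (Int.castRingHom (ZMod 2)) / (X + 1) ^ 2 = g := by
        rw [hfac]
        exact mul_div_cancel_left₀ g (pow_ne_zero 2 hXne)
      rw [hdiv]
      exact (X_add_one_irred.coprime_iff_not_dvd.mpr (not_dvd_of_eval_one hevg)).symm
end

section
/- For every odd negative integer n, the coefficient of w^2 in q_n, reduced modulo 3, is never 0; in fact these coefficients mod 3 cycle with period 12 through the values 2,2,2,1,1,1 (for n = -1,-3,-5,-7,-9,-11 respectively, and then repeating). -/
open Polynomial

/-- table of (coeff 0, coeff 2) mod 3, period 6 -/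
def qTab : ℕ → ZMod 3 × ZMod 3
  | 0 => (2, 2) | 1 => (0, 2) | 2 => (2, 2) | 3 => (0, 1) | 4 => (2, 1) | _ => (0, 1)

lemma qAux_rec0 (k : ℕ) : (qAux (k+3)).coeff 0 =
    -((qAux (k+2)).coeff 0 - (qAux (k+1)).coeff 0) + (qAux k).coeff 0 := by
  show ((X^2-1) * (qAux (k+2) - qAux (k+1)) + qAux k).coeff 0 = _
  simp [mul_coeff_zero, coeff_sub]

lemma qAux_rec2 (k : ℕ) : (qAux (k+3)).coeff 2 =
    ((qAux (k+2)).coeff 0 - (qAux (k+1)).coeff 0)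
    - ((qAux (k+2)).coeff 2 - (qAux (k+1)).coeff 2) + (qAux k).coeff 2 := by
  show ((X^2-1) * (qAux (k+2) - qAux (k+1)) + qAux k).coeff 2 = _
  rw [sub_mul, one_mul, coeff_add, coeff_sub, show (2:ℕ) = 0+2 from rfl, coeff_X_pow_mul]
  simp [coeff_sub]

lemma qAux_tab : ∀ k : ℕ,
    (((qAux k).coeff 0 : ZMod 3) = (qTab (k % 6)).1) ∧
    (((qAux k).coeff 2 : ZMod 3) = (qTab (k % 6)).2)
  | 0 => by
      constructor <;> · show ((((X ^ 3 - X ^ 2 + 2 * X - 7 : Polynomial ℤ)).coeff _ : ℤ) : ZMod 3) = _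
                        simp [coeff_sub, coeff_add, coeff_X_pow, coeff_one, coeff_X, qTab]
                        decide
  | 1 => by
      constructor <;> · show ((((X ^ 5 - 2 * X ^ 4 - 2 * X ^ 3 + 5 * X ^ 2 + 3 * X - 9 : Polynomial ℤ)).coeff _ : ℤ) : ZMod 3) = _
                        simp [coeff_sub, coeff_add, coeff_X_pow, coeff_one, coeff_X, qTab]
                        decide
  | 2 => by
      constructor <;> · show ((((X ^ 7 - 2 * X ^ 6 - 4 * X ^ 5 + 8 * X ^ 4 + 4 * X ^ 3 - 7 * X ^ 2 + 2 * X - 7 : Polynomial ℤ)).coeff _ : ℤ) : ZMod 3) = _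
                        simp [coeff_sub, coeff_add, coeff_X_pow, coeff_one, coeff_X, qTab]
                        decide
  | (k + 3) => by
      have h0 := qAux_tab k
      have h1 := qAux_tab (k + 1)
      have h2 := qAux_tab (k + 2)
      have r0 := qAux_rec0 k
      have r2 := qAux_rec2 k
      have hr : k % 6 < 6 := Nat.mod_lt _ (by norm_num)
      have e3 : (k + 3) % 6 = (k % 6 + 3) % 6 := by omega
      have e1 : (k + 1) % 6 = (k % 6 + 1) % 6 := by omega
      have e2 : (k + 2) % 6 = (k % 6 + 2) % 6 := by omega
      rw [e1] at h1; rw [e2] at h2; rw [e3]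
      constructor
      · have := congrArg (fun z : ℤ => (z : ZMod 3)) r0
        push_cast at this
        rw [this, h0.1, h1.1, h2.1]
        interval_cases h : (k % 6) <;> decide
      · have := congrArg (fun z : ℤ => (z : ZMod 3)) r2
        push_cast at this
        rw [this, h0.2, h1.1, h1.2, h2.1, h2.2]
        interval_cases h : (k % 6) <;> decide


/-- For every odd negative integer `n`, the coefficient of `w^2` in `q_n` is
nonzero mod `3`; in fact these coefficients mod `3` cycle with period `12`:
the value is `2` for `n ≡ -1, -3, -5 (mod 12)` and `1` for
`n ≡ -7, -9, -11 (mod 12)`. -/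
theorem q_coeff_two_mod_three (n : ℤ) (hodd : Odd n) (hneg : n < 0) :
    (((qq n).coeff 2 : ZMod 3) ≠ 0) ∧
    ((n % 12 = 11 ∨ n % 12 = 9 ∨ n % 12 = 7) → ((qq n).coeff 2 : ZMod 3) = 2) ∧
    ((n % 12 = 5 ∨ n % 12 = 3 ∨ n % 12 = 1) → ((qq n).coeff 2 : ZMod 3) = 1) := by
  obtain ⟨m, hm⟩ := hodd
  set k : ℕ := ((-1 - n) / 2).toNat with hk
  have hq : qq n = qAux k := rfl
  have hn : n = -(2 * (k : ℤ) + 1) := by omega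
  have htab := (qAux_tab k).2
  rw [hq, htab]
  have hr : k % 6 < 6 := Nat.mod_lt _ (by norm_num)
  interval_cases h : (k % 6) <;>
    simp only [qTab] <;>
    refine ⟨by decide, fun hc => ?_, fun hc => ?_⟩ <;>
    first
      | decide
      | (exfalso; omega)
end
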